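/- Let $\mathcal{X}$ be a complex Hilbert space, $T > 0$, and let $A : \mathcal{X} \supseteq \operatorname{dom}(A) \to \mathcal{X}$ be a dissipative linear operator. Let $P : [0,T] \to \mathcal{L}(\mathcal{X})$ be such that each $P(t)$ is self-adjoint, coercive with $\langle P(t)x,x\rangle \geq \|x\|^2/U$, and $\|P(t)\|, \|\dot P(t)\|, \|G(t)\| \leq U$ for some constant $U \geq 1$, where $t \mapsto \langle P(t)x, y\rangle$ is differentiable with derivative $\langle \dot P(t)x, y\rangle$, and $G : [0,T] \to \mathcal{L}(\mathcal{X})$. Suppose $w \in C^1([0,T];\mathcal{X})$ satisfies $P(t)w(t) \in \operatorname{dom}(A)$ and $\dot w(t) = A P(t) w(t) + G(t) w(t)$ for all $t$, with $w(0) = 0$. Then $w(t) = 0$ for all $t \in [0,T]$. -/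

import Mathlib

open Set Asymptotics Filter Topology

theorem stmt_14
    {X : Type*} [NormedAddCommGroup X] [InnerProductSpace ℂ X] [CompleteSpace X]
    (T : ℝ) (hT : 0 < T)
    (dom : Submodule ℂ X) (A : dom →ₗ[ℂ] X)
    (hdiss : ∀ x : dom, (inner ℂ (A x) (x : X) : ℂ).re ≤ 0)
    (U : ℝ) (hU : 1 ≤ U)
    (P Pd G : ℝ → X →L[ℂ] X)
    (hPsa : ∀ t ∈ Set.Icc 0 T, IsSelfAdjoint (P t))
    (hPcoer : ∀ t ∈ Set.Icc 0 T, ∀ x : X, ‖x‖ ^ 2 / U ≤ (inner ℂ ((P t) x) x : ℂ).re)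
    (hPbound : ∀ t ∈ Set.Icc 0 T, ‖P t‖ ≤ U)
    (hPdbound : ∀ t ∈ Set.Icc 0 T, ‖Pd t‖ ≤ U)
    (hGbound : ∀ t ∈ Set.Icc 0 T, ‖G t‖ ≤ U)
    (hPderiv : ∀ x y : X, ∀ t ∈ Set.Icc 0 T,
      HasDerivWithinAt (fun s => (inner ℂ ((P s) x) y : ℂ)) (inner ℂ ((Pd t) x) y)
        (Set.Icc 0 T) t)
    (w w' : ℝ → X)
    (hw : ∀ t ∈ Set.Icc 0 T, HasDerivWithinAt w (w' t) (Set.Icc 0 T) t)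
    (hw'cont : ContinuousOn w' (Set.Icc 0 T))
    (hmem : ∀ t ∈ Set.Icc 0 T, (P t) (w t) ∈ dom)
    (hode : ∀ t : ℝ, ∀ ht : t ∈ Set.Icc 0 T,
      w' t = A ⟨(P t) (w t), hmem t ht⟩ + (G t) (w t))
    (h0 : w 0 = 0) :
    ∀ t ∈ Set.Icc 0 T, w t = 0 := by
  have hU0 : (0:ℝ) < U := lt_of_lt_of_le one_pos hU
  -- P is Lipschitz pointwise
  have hLip : ∀ s ∈ Set.Icc 0 T, ∀ t ∈ Set.Icc 0 T, ∀ x : X,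
      ‖(P s) x - (P t) x‖ ≤ U * |s - t| * ‖x‖ := by
    intro s hs t ht x
    set z := (P s) x - (P t) x with hz
    have key : ‖(inner ℂ ((P s) x) z : ℂ) - inner ℂ ((P t) x) z‖ ≤ (U * ‖x‖ * ‖z‖) * ‖s - t‖ := by
      apply Convex.norm_image_sub_le_of_norm_hasDerivWithin_le
        (f' := fun r => (inner ℂ ((Pd r) x) z : ℂ))
        (fun r hr => hPderiv x z r hr) ?_ (convex_Icc 0 T) ht hs
      intro r hr
      calc ‖(inner ℂ ((Pd r) x) z : ℂ)‖ ≤ ‖(Pd r) x‖ * ‖z‖ := norm_inner_le_norm _ _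
        _ ≤ (‖Pd r‖ * ‖x‖) * ‖z‖ := by gcongr; exact (Pd r).le_opNorm x
        _ ≤ (U * ‖x‖) * ‖z‖ := by gcongr; exact hPdbound r hr
        _ = U * ‖x‖ * ‖z‖ := by ring
    have hz2 : ‖z‖ ^ 2 ≤ U * ‖x‖ * ‖z‖ * |s - t| := by
      have he : (inner ℂ ((P s) x) z : ℂ) - inner ℂ ((P t) x) z = inner ℂ z z := by
        rw [← inner_sub_left]
      rw [he] at key
      have : ‖(inner ℂ z z : ℂ)‖ = ‖z‖ ^ 2 := by
        rw [inner_self_eq_norm_sq_to_K]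
        simp [pow_two]
      rw [this, Real.norm_eq_abs] at key
      linarith
    rcases eq_or_lt_of_le (norm_nonneg z) with h | h
    · rw [← h]; positivity
    · have := (mul_le_mul_iff_left₀ h).mp (by nlinarith [hz2] : ‖z‖ * ‖z‖ ≤ (U * |s - t| * ‖x‖) * ‖z‖)
      exact this
  -- the Lyapunov function
  set vC : ℝ → ℂ := fun s => inner ℂ ((P s) (w s)) (w s) with hvCdef
  set v : ℝ → ℝ := fun s => (vC s).re with hvdef
  set d : ℝ → ℂ := fun t =>
    inner ℂ ((P t) (w t)) (w' t) + inner ℂ ((P t) (w' t)) (w t) + inner ℂ ((Pd t) (w t)) (w t) with hddef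
  have hvC : ∀ t ∈ Set.Icc 0 T, HasDerivWithinAt vC (d t) (Set.Icc 0 T) t := by
    intro t ht
    have hwt := hw t ht
    have hF1 : HasDerivWithinAt (fun s => (inner ℂ ((P t) (w s)) (w s) : ℂ))
        (inner ℂ ((P t) (w t)) (w' t) + inner ℂ ((P t) ((w' t))) (w t)) (Set.Icc 0 T) t := by
      have hPw : HasDerivWithinAt (fun s => (P t) (w s)) ((P t) (w' t)) (Set.Icc 0 T) t := by
        exact (((P t).restrictScalars ℝ).hasFDerivAt (x := w t)).comp_hasDerivWithinAt t hwt
      exact hPw.inner ℂ hwt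
    have hG2 : HasDerivWithinAt
        (fun s => (inner ℂ ((P s) (w t)) (w t) : ℂ) - inner ℂ ((P t) (w t)) (w t))
        (inner ℂ ((Pd t) (w t)) (w t)) (Set.Icc 0 T) t :=
      (hPderiv (w t) (w t) t ht).sub_const _
    have hR : HasDerivWithinAt
        (fun s => (inner ℂ ((P s) (w s) - (P t) (w s)) (w s) : ℂ)
          - inner ℂ ((P s) (w t) - (P t) (w t)) (w t)) 0 (Set.Icc 0 T) t := by
      rw [hasDerivWithinAt_iff_isLittleO]
      have hRt : (inner ℂ ((P t) (w t) - (P t) (w t)) (w t) : ℂ)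
          - inner ℂ ((P t) (w t) - (P t) (w t)) (w t) = 0 := by simp
      have hco : (fun s => ‖w s - w t‖ * (‖w s‖ + ‖w t‖))
          =o[nhdsWithin t (Set.Icc 0 T)] (fun _ => (1:ℝ)) := by
        rw [isLittleO_one_iff]
        have hcw : ContinuousWithinAt w (Set.Icc 0 T) t := hwt.continuousWithinAt
        have h1 : Tendsto (fun s => ‖w s - w t‖) (nhdsWithin t (Set.Icc 0 T)) (𝓝 0) := by
          have h := (hcw.sub (continuousWithinAt_const (b := w t))).norm
          unfold ContinuousWithinAt at h
          simpa using h
        have h2 : Tendsto (fun s => ‖w s‖ + ‖w t‖) (nhdsWithin t (Set.Icc 0 T))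
            (𝓝 (‖w t‖ + ‖w t‖)) := (hcw.norm.add continuousWithinAt_const)
        simpa using h1.mul h2
      have hbigO : (fun s => (inner ℂ ((P s) (w s) - (P t) (w s)) (w s) : ℂ)
            - inner ℂ ((P s) (w t) - (P t) (w t)) (w t))
          =O[nhdsWithin t (Set.Icc 0 T)]
            (fun s => (‖w s - w t‖ * (‖w s‖ + ‖w t‖)) * (s - t)) := by
        apply IsBigO.of_bound U
        filter_upwards [self_mem_nhdsWithin] with s hs
        have hid : (inner ℂ ((P s) (w s) - (P t) (w s)) (w s) : ℂ)
            - inner ℂ ((P s) (w t) - (P t) (w t)) (w t)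
            = (inner ℂ ((P s) (w s - w t) - (P t) (w s - w t)) (w s) : ℂ)
              + inner ℂ ((P s) (w t) - (P t) (w t)) (w s - w t) := by
          simp only [map_sub, inner_sub_left, inner_sub_right]
          ring
        rw [hid]
        have b1 : ‖(inner ℂ ((P s) (w s - w t) - (P t) (w s - w t)) (w s) : ℂ)‖
            ≤ (U * |s - t| * ‖w s - w t‖) * ‖w s‖ := by
          calc _ ≤ ‖(P s) (w s - w t) - (P t) (w s - w t)‖ * ‖w s‖ := norm_inner_le_norm _ _
            _ ≤ (U * |s - t| * ‖w s - w t‖) * ‖w s‖ := by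
                gcongr; exact hLip s hs t ht _
        have b2 : ‖(inner ℂ ((P s) (w t) - (P t) (w t)) (w s - w t) : ℂ)‖
            ≤ (U * |s - t| * ‖w t‖) * ‖w s - w t‖ := by
          calc _ ≤ ‖(P s) (w t) - (P t) (w t)‖ * ‖w s - w t‖ := norm_inner_le_norm _ _
            _ ≤ (U * |s - t| * ‖w t‖) * ‖w s - w t‖ := by
                gcongr; exact hLip s hs t ht _
        have htri := norm_add_le ((inner ℂ ((P s) (w s - w t) - (P t) (w s - w t)) (w s) : ℂ))
          ((inner ℂ ((P s) (w t) - (P t) (w t)) (w s - w t) : ℂ))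
        have habs : ‖(‖w s - w t‖ * (‖w s‖ + ‖w t‖)) * (s - t)‖
            = (‖w s - w t‖ * (‖w s‖ + ‖w t‖)) * |s - t| := by
          rw [Real.norm_eq_abs, abs_mul, abs_mul, abs_norm,
            abs_of_nonneg (by positivity : (0:ℝ) ≤ ‖w s‖ + ‖w t‖)]
        rw [habs]
        nlinarith [norm_nonneg (w s - w t), norm_nonneg (w s), norm_nonneg (w t),
          abs_nonneg (s - t)]
      have hlo : (fun s => (‖w s - w t‖ * (‖w s‖ + ‖w t‖)) * (s - t))
          =o[nhdsWithin t (Set.Icc 0 T)] (fun s => s - t) := by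
        simpa using hco.mul_isBigO
          (isBigO_refl (fun s : ℝ => s - t) (nhdsWithin t (Set.Icc 0 T)))
      have := hbigO.trans_isLittleO hlo
      simpa [hRt] using this
    have hsum := (hF1.add hG2).add hR
    have heq : ∀ s, vC s
        = (inner ℂ ((P t) (w s)) (w s) : ℂ)
          + ((inner ℂ ((P s) (w t)) (w t) : ℂ) - inner ℂ ((P t) (w t)) (w t))
          + ((inner ℂ ((P s) (w s) - (P t) (w s)) (w s) : ℂ)
            - inner ℂ ((P s) (w t) - (P t) (w t)) (w t)) := by
      intro s
      simp only [hvCdef, inner_sub_left]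
      ring
    have : HasDerivWithinAt vC
        ((inner ℂ ((P t) (w t)) (w' t) + inner ℂ ((P t) ((w' t))) (w t))
          + inner ℂ ((Pd t) (w t)) (w t) + 0) (Set.Icc 0 T) t :=
      hsum.congr (fun s _ => heq s) (heq t)
    simpa [hddef, add_assoc] using this
  -- derivative of v
  have hv : ∀ t ∈ Set.Icc 0 T, HasDerivWithinAt v ((d t).re) (Set.Icc 0 T) t := by
    intro t ht
    have := Complex.reCLM.hasFDerivAt.comp_hasDerivWithinAt t (hvC t ht)
    simpa [hvdef, Function.comp_def] using this
  -- the key differential inequality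
  set σ : ℝ := (2 * U ^ 2 + U) * U with hσdef
  have hσ0 : 0 ≤ σ := by positivity
  have hDle : ∀ t ∈ Set.Icc 0 T, (d t).re ≤ σ * v t := by
    intro t ht
    have hw2 : ‖w t‖ ^ 2 ≤ U * v t := by
      have := hPcoer t ht (w t)
      rw [div_le_iff₀ hU0] at this
      calc ‖w t‖ ^ 2 ≤ (inner ℂ ((P t) (w t)) (w t) : ℂ).re * U := this
        _ = U * v t := by rw [hvdef]; ring
    -- re-expressions
    have hsymm : (inner ℂ ((P t) (w' t)) (w t) : ℂ) = inner ℂ (w' t) ((P t) (w t)) :=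
      (hPsa t ht).isSymmetric (w' t) (w t)
    have hconj : ((inner ℂ ((P t) (w t)) (w' t) : ℂ)).re
        = ((inner ℂ (w' t) ((P t) (w t)) : ℂ)).re := by
      rw [← inner_conj_symm (𝕜 := ℂ) (w' t) ((P t) (w t)), Complex.conj_re]
    have hdre : (d t).re = 2 * ((inner ℂ (w' t) ((P t) (w t)) : ℂ)).re
        + ((inner ℂ ((Pd t) (w t)) (w t) : ℂ)).re := by
      simp only [hddef, Complex.add_re, hconj, hsymm]
      ring
    -- plug in the ODE
    have hode' := hode t ht
    have hsplit : ((inner ℂ (w' t) ((P t) (w t)) : ℂ)).re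
        = ((inner ℂ (A ⟨(P t) (w t), hmem t ht⟩) ((P t) (w t)) : ℂ)).re
          + ((inner ℂ ((G t) (w t)) ((P t) (w t)) : ℂ)).re := by
      rw [hode', inner_add_left, Complex.add_re]
    have hd1 : ((inner ℂ (A ⟨(P t) (w t), hmem t ht⟩) ((P t) (w t)) : ℂ)).re ≤ 0 :=
      hdiss ⟨(P t) (w t), hmem t ht⟩
    have hd2 : ((inner ℂ ((G t) (w t)) ((P t) (w t)) : ℂ)).re ≤ U ^ 2 * ‖w t‖ ^ 2 := by
      calc ((inner ℂ ((G t) (w t)) ((P t) (w t)) : ℂ)).re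
          ≤ ‖(inner ℂ ((G t) (w t)) ((P t) (w t)) : ℂ)‖ := Complex.re_le_norm _
        _ ≤ ‖(G t) (w t)‖ * ‖(P t) (w t)‖ := norm_inner_le_norm _ _
        _ ≤ (U * ‖w t‖) * (U * ‖w t‖) := by
            apply mul_le_mul _ _ (norm_nonneg _) (by positivity)
            · exact le_trans ((G t).le_opNorm _) (by gcongr; exact hGbound t ht)
            · exact le_trans ((P t).le_opNorm _) (by gcongr; exact hPbound t ht)
        _ = U ^ 2 * ‖w t‖ ^ 2 := by ring
    have hd3 : ((inner ℂ ((Pd t) (w t)) (w t) : ℂ)).re ≤ U * ‖w t‖ ^ 2 := by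
      calc ((inner ℂ ((Pd t) (w t)) (w t) : ℂ)).re
          ≤ ‖(inner ℂ ((Pd t) (w t)) (w t) : ℂ)‖ := Complex.re_le_norm _
        _ ≤ ‖(Pd t) (w t)‖ * ‖w t‖ := norm_inner_le_norm _ _
        _ ≤ (U * ‖w t‖) * ‖w t‖ := by
            gcongr
            exact le_trans ((Pd t).le_opNorm _) (by gcongr; exact hPdbound t ht)
        _ = U * ‖w t‖ ^ 2 := by ring
    rw [hdre, hsplit]
    have : 2 * (((inner ℂ (A ⟨(P t) (w t), hmem t ht⟩) ((P t) (w t)) : ℂ)).re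
        + ((inner ℂ ((G t) (w t)) ((P t) (w t)) : ℂ)).re)
        + ((inner ℂ ((Pd t) (w t)) (w t) : ℂ)).re ≤ (2 * U ^ 2 + U) * ‖w t‖ ^ 2 := by
      nlinarith
    calc _ ≤ (2 * U ^ 2 + U) * ‖w t‖ ^ 2 := this
      _ ≤ (2 * U ^ 2 + U) * (U * v t) := by
          apply mul_le_mul_of_nonneg_left hw2 (by positivity)
      _ = σ * v t := by rw [hσdef]; ring
  -- v is nonnegative
  have hv0 : ∀ t ∈ Set.Icc 0 T, 0 ≤ v t := by
    intro t ht
    have := hPcoer t ht (w t)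
    have h2 : (0:ℝ) ≤ ‖w t‖ ^ 2 / U := by positivity
    exact le_trans h2 this
  -- the damped function u
  set u : ℝ → ℝ := fun s => Real.exp (-σ * s) * v s with hudef
  have hucont : ContinuousOn u (Set.Icc 0 T) := by
    apply ContinuousOn.mul
    · exact (Real.continuous_exp.comp (continuous_const.mul continuous_id)).continuousOn
    · exact fun t ht => (hv t ht).continuousWithinAt
  have huderiv : ∀ t ∈ Set.Ioo 0 T, HasDerivAt u
      ((Real.exp (-σ * t) * (-σ)) * v t + Real.exp (-σ * t) * (d t).re) t := by
    intro t ht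
    have ht' : t ∈ Set.Icc 0 T := Set.mem_Icc_of_Ioo ht
    have hvt : HasDerivAt v ((d t).re) t :=
      (hv t ht').hasDerivAt (Icc_mem_nhds ht.1 ht.2)
    have he : HasDerivAt (fun s => Real.exp (-σ * s)) (Real.exp (-σ * t) * (-σ)) t := by
      have h1 : HasDerivAt (fun s : ℝ => -σ * s) (-σ) t := by
        simpa using (hasDerivAt_id t).const_mul (-σ)
      simpa using h1.exp
    exact he.mul hvt
  have hmono : AntitoneOn u (Set.Icc 0 T) := by
    apply antitoneOn_of_deriv_nonpos (convex_Icc 0 T) hucont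
    · rw [interior_Icc]
      exact fun t ht => (huderiv t ht).differentiableAt.differentiableWithinAt
    · rw [interior_Icc]
      intro t ht
      rw [(huderiv t ht).deriv]
      have h1 := hDle t (Set.mem_Icc_of_Ioo ht)
      have h2 := Real.exp_pos (-σ * t)
      nlinarith
  -- conclude
  intro t ht
  have hu0 : u 0 = 0 := by
    simp [hudef, hvdef, hvCdef, h0]
  have h1 : u t ≤ 0 := by
    have := hmono (Set.left_mem_Icc.mpr hT.le) ht ht.1
    rwa [hu0] at this
  have h2 : 0 ≤ u t := by
    have := hv0 t ht
    have := Real.exp_pos (-σ * t)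
    positivity
  have hvt0 : v t = 0 := by
    have hep := Real.exp_pos (-σ * t)
    have : u t = 0 := le_antisymm h1 h2
    rw [hudef] at this
    simp only at this
    nlinarith [hv0 t ht]
  have : ‖w t‖ ^ 2 / U ≤ 0 := by
    have := hPcoer t ht (w t)
    rw [← hvt0]
    exact this
  have hn : ‖w t‖ = 0 := by
    have h3 : (0:ℝ) ≤ ‖w t‖ ^ 2 / U := by positivity
    have h4 : ‖w t‖ ^ 2 / U = 0 := le_antisymm ‹_› h3
    have h5 : ‖w t‖ ^ 2 = 0 := by
      field_simp at h4
      simpa using h4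
    exact (pow_eq_zero_iff (two_ne_zero)).mp h5
  exact norm_eq_zero.mp hn
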